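/- Let m, n ≥ 2 be coprime with d = ord_m(n), and let a_1,…,a_d be the period of the base-n expansion of 1/m. For any t ≥ 0, the periodic base-n expansion with digit sequence a_{t+1},…,a_d,a_1,…,a_t (repeated) equals the fractional part of n^t/m, i.e., [n^t]_m/m. -/
import Mathlib


/-- Least positive residue of `g` modulo `m`. -/
def lpr (g m : ℕ) : ℕ := if g % m = 0 then m else g % m

/-- The `k`-th digit of the base-`n` expansion of `1/m`:
`a_k = ⌊n^k/m⌋ − n·⌊n^{k−1}/m⌋`. -/
def baseDigit (n m k : ℕ) : ℕ := n ^ k / m - n * (n ^ (k - 1) / m)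

lemma baseDigit_succ (n m k : ℕ) (hm : 0 < m) :
    baseDigit n m (k + 1) = n * (n ^ k % m) / m := by
  unfold baseDigit
  have h : n ^ (k + 1) = m * (n * (n ^ k / m)) + n * (n ^ k % m) := by
    conv_lhs => rw [pow_succ, ← Nat.div_add_mod (n ^ k) m]
    ring
  have h2 : n ^ (k + 1) / m = n * (n ^ k / m) + n * (n ^ k % m) / m := by
    rw [h, Nat.mul_add_div hm]
  simp only [Nat.add_sub_cancel]
  rw [h2, Nat.add_sub_cancel_left]

lemma baseDigit_key (n m k : ℕ) (hm : 0 < m) :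
    m * baseDigit n m (k + 1) + n ^ (k + 1) % m = n * (n ^ k % m) := by
  have h : n ^ (k + 1) = m * (n * (n ^ k / m)) + n * (n ^ k % m) := by
    conv_lhs => rw [pow_succ, ← Nat.div_add_mod (n ^ k) m]
    ring
  have hmod : n ^ (k + 1) % m = n * (n ^ k % m) % m := by
    rw [h, Nat.mul_add_mod]
  rw [baseDigit_succ n m k hm, hmod, Nat.div_add_mod]

lemma tele (n : ℤ) (g : ℕ → ℤ) :
    ∀ d : ℕ, ∑ j ∈ Finset.range d, (n * g j - g (j + 1)) * n ^ (d - 1 - j)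
      = g 0 * n ^ d - g d := by
  intro d
  induction d with
  | zero => simp
  | succ d ih =>
    rw [Finset.sum_range_succ]
    have h1 : ∑ j ∈ Finset.range d, (n * g j - g (j + 1)) * n ^ (d + 1 - 1 - j)
        = n * ∑ j ∈ Finset.range d, (n * g j - g (j + 1)) * n ^ (d - 1 - j) := by
      rw [Finset.mul_sum]
      apply Finset.sum_congr rfl
      intro j hj
      have hj' : j < d := Finset.mem_range.mp hj
      have : d + 1 - 1 - j = (d - 1 - j) + 1 := by omega
      rw [this, pow_succ]
      ring
    rw [h1, ih]
    have : d + 1 - 1 - d = 0 := by omega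
    rw [this]
    rw [pow_succ]
    ring

theorem shifted_expansion_value (m n : ℕ) (hm : 2 ≤ m) (hn : 2 ≤ n)
    (hco : Nat.Coprime m n) (t : ℕ) :
    (∑ j ∈ Finset.range (orderOf (n : ZMod m)),
        (baseDigit n m (((t + j) % orderOf (n : ZMod m)) + 1) : ℝ) *
          n ^ (orderOf (n : ZMod m) - 1 - j)) / (n ^ orderOf (n : ZMod m) - 1)
      = (lpr (n ^ t) m : ℝ) / m := by
  have hm0 : 0 < m := by omega
  haveI : NeZero m := ⟨by omega⟩
  set d := orderOf (n : ZMod m) with hd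
  -- d ≥ 1
  have hdpos : 0 < d := by
    have hu : orderOf (ZMod.unitOfCoprime n hco.symm) = d := by
      rw [hd, ← orderOf_units, ZMod.coe_unitOfCoprime]
    rw [← hu]
    exact orderOf_pos _
  -- n^d ≡ 1 mod m
  have hd1 : ((n : ZMod m)) ^ d = 1 := pow_orderOf_eq_one _
  have hmodeq : n ^ d % m = 1 % m := by
    have : ((n ^ d : ℕ) : ZMod m) = ((1 : ℕ) : ZMod m) := by push_cast [hd1]; rfl
    exact (ZMod.natCast_eq_natCast_iff _ _ _).mp this
  have hmod1 : n ^ d % m = 1 := by rw [hmodeq, Nat.mod_eq_of_lt (by omega)]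
  -- periodicity of powers mod m
  have hper : ∀ s : ℕ, n ^ s % m = n ^ (s % d) % m := by
    intro s
    have h1 : n ^ d ≡ 1 [MOD m] := hmodeq
    have : n ^ s ≡ n ^ (s % d) [MOD m] := by
      conv_lhs => rw [← Nat.div_add_mod s d, pow_add, pow_mul]
      calc (n ^ d) ^ (s / d) * n ^ (s % d)
          ≡ 1 ^ (s / d) * n ^ (s % d) [MOD m] := (h1.pow _).mul_right _
        _ = n ^ (s % d) := by rw [one_pow, one_mul]
    exact this
  -- digit periodicity
  have hdig : ∀ j : ℕ, baseDigit n m (((t + j) % d) + 1) = baseDigit n m ((t + j) + 1) := by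
    intro j
    rw [baseDigit_succ n m _ hm0, baseDigit_succ n m _ hm0, ← hper (t + j)]
  -- key identity over ℤ
  have hkeyZ : ∀ k : ℕ, (m : ℤ) * (baseDigit n m (k + 1) : ℤ)
      = (n : ℤ) * ((n ^ k % m : ℕ) : ℤ) - ((n ^ (k + 1) % m : ℕ) : ℤ) := by
    intro k
    have h := baseDigit_key n m k hm0
    have h2 : (m : ℤ) * (baseDigit n m (k + 1) : ℤ) + ((n ^ (k + 1) % m : ℕ) : ℤ)
        = (n : ℤ) * ((n ^ k % m : ℕ) : ℤ) := by exact_mod_cast h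
    linarith
  set g : ℕ → ℤ := fun j => ((n ^ (t + j) % m : ℕ) : ℤ) with hg
  have hsum : (m : ℤ) * ∑ j ∈ Finset.range d,
      (baseDigit n m (((t + j) % d) + 1) : ℤ) * (n : ℤ) ^ (d - 1 - j)
      = ((n ^ t % m : ℕ) : ℤ) * ((n : ℤ) ^ d - 1) := by
    rw [Finset.mul_sum]
    have hcongr : ∀ j ∈ Finset.range d,
        (m : ℤ) * ((baseDigit n m (((t + j) % d) + 1) : ℤ) * (n : ℤ) ^ (d - 1 - j))
        = ((n : ℤ) * g j - g (j + 1)) * (n : ℤ) ^ (d - 1 - j) := by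
      intro j _
      rw [hdig j, ← mul_assoc, hkeyZ (t + j)]
      have : t + (j + 1) = (t + j) + 1 := by omega
      rw [hg]
      simp only [this]
    rw [Finset.sum_congr rfl hcongr, tele]
    have hg0 : g 0 = ((n ^ t % m : ℕ) : ℤ) := by simp [hg]
    have hgd : g d = ((n ^ t % m : ℕ) : ℤ) := by
      have : n ^ (t + d) % m = n ^ t % m := by
        rw [hper (t + d), hper t, Nat.add_mod_right]
      simp only [hg]
      exact_mod_cast congrArg (Nat.cast : ℕ → ℤ) this
    rw [hg0, hgd]
    ring
  -- lpr computes the residue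
  have hlpr : lpr (n ^ t) m = n ^ t % m := by
    unfold lpr
    rw [if_neg]
    intro h
    have hdvd : m ∣ n ^ t := Nat.dvd_of_mod_eq_zero h
    have hc : Nat.Coprime m (n ^ t) := hco.pow_right t
    have h1 : m = 1 := Nat.Coprime.eq_one_of_dvd hc hdvd
    omega
  -- pass to ℝ
  have hsumR : (m : ℝ) * ∑ j ∈ Finset.range d,
      (baseDigit n m (((t + j) % d) + 1) : ℝ) * (n : ℝ) ^ (d - 1 - j)
      = ((n ^ t % m : ℕ) : ℝ) * ((n : ℝ) ^ d - 1) := by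
    have h := congrArg (fun z : ℤ => (z : ℝ)) hsum
    push_cast at h
    rw [show ((n : ℤ) ^ t % (m : ℤ)) = ((n ^ t % m : ℕ) : ℤ) by exact_mod_cast rfl,
      Int.cast_natCast] at h
    exact h
  rw [hlpr]
  have hne1 : (n : ℝ) ^ d - 1 ≠ 0 := by
    have h2 : (2 : ℝ) ≤ (n : ℝ) ^ d := by
      calc (2 : ℝ) ≤ (n : ℝ) := by exact_mod_cast hn
        _ ≤ (n : ℝ) ^ d := le_self_pow₀ (by exact_mod_cast (by omega : 1 ≤ n)) (by omega)
    linarith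
  have hmne : (m : ℝ) ≠ 0 := by positivity
  field_simp
  linarith [hsumR]
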